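/- Let G be an oriented graph and let P be an oriented path of length n ≥ 1, with l = l(P) the length of the longest directed subpath of P. If G contains a k-mindegree pair for some real k, then either P is a subgraph of G, or G contains an independent set of size at least (k - n)/l. -/

import Mathlib

namespace PathAux

variable {V : Type*}

/-- Set of lengths of `F`-walks starting at `v`. -/
def wSet (F : Finset (V × V)) (v : V) : Set ℕ :=
  {d | ∃ p : ℕ → V, p 0 = v ∧ ∀ i < d, (p i, p (i + 1)) ∈ F}

lemma wSet_nonempty (F : Finset (V × V)) (v : V) : (wSet F v).Nonempty :=
  ⟨0, fun _ => v, rfl, fun i hi => absurd hi (Nat.not_lt_zero i)⟩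

lemma walk_rank_le (F : Finset (V × V)) (r : V → ℕ) (hr : ∀ e ∈ F, r e.2 < r e.1)
    (p : ℕ → V) (d : ℕ) (hp : ∀ i < d, (p i, p (i + 1)) ∈ F) :
    r (p d) + d ≤ r (p 0) := by
  induction d with
  | zero => simp
  | succ d ih =>
    have h1 : r (p (d+1)) < r (p d) := hr _ (hp d (Nat.lt_succ_self d))
    have h2 := ih (fun i hi => hp i (Nat.lt_succ_of_lt hi))
    omega

lemma wSet_bdd (F : Finset (V × V)) (r : V → ℕ) (hr : ∀ e ∈ F, r e.2 < r e.1) (v : V) :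
    BddAbove (wSet F v) := by
  refine ⟨r v, fun d hd => ?_⟩
  obtain ⟨p, h0, hp⟩ := hd
  have h2 := walk_rank_le F r hr p d hp
  rw [h0] at h2
  omega

/-- Length of the longest `F`-walk starting at `v`. -/
noncomputable def rankF (F : Finset (V × V)) (v : V) : ℕ := sSup (wSet F v)

lemma rankF_mem (F : Finset (V × V)) (r : V → ℕ) (hr : ∀ e ∈ F, r e.2 < r e.1) (v : V) :
    rankF F v ∈ wSet F v :=
  Nat.sSup_mem (wSet_nonempty F v) (wSet_bdd F r hr v)

lemma le_rankF (F : Finset (V × V)) (r : V → ℕ) (hr : ∀ e ∈ F, r e.2 < r e.1) {v : V}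
    {d : ℕ} (hd : d ∈ wSet F v) : d ≤ rankF F v :=
  le_csSup (wSet_bdd F r hr v) hd

lemma rankF_succ (F : Finset (V × V)) (r : V → ℕ) (hr : ∀ e ∈ F, r e.2 < r e.1)
    {v u : V} (h : (v, u) ∈ F) : rankF F u + 1 ≤ rankF F v := by
  obtain ⟨p, h0, hp⟩ := rankF_mem F r hr u
  refine le_rankF F r hr ⟨fun i => if i = 0 then v else p (i - 1), by simp, ?_⟩
  intro i hi
  rcases Nat.eq_zero_or_pos i with h' | h'
  · subst h'
    simpa [h0] using h
  · have hi1 : i - 1 < rankF F u := by omega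
    have := hp (i - 1) hi1
    have e1 : i ≠ 0 := by omega
    have e2 : i + 1 ≠ 0 := by omega
    simpa [e1, e2, Nat.succ_sub_one, show i + 1 - 1 = i from rfl,
      show i - 1 + 1 = i by omega] using this

lemma rankF_walk (F : Finset (V × V)) (r : V → ℕ) (hr : ∀ e ∈ F, r e.2 < r e.1)
    (p : ℕ → V) (d : ℕ) (hp : ∀ i < d, (p i, p (i + 1)) ∈ F) :
    rankF F (p d) + d ≤ rankF F (p 0) := by
  induction d with
  | zero => simp
  | succ d ih =>
    have h1 := rankF_succ F r hr (hp d (Nat.lt_succ_self d))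
    have h2 := ih (fun i hi => hp i (Nat.lt_succ_of_lt hi))
    omega

/-- Key lemma: if all independent sets are smaller than `s` and `W` has at least
`(m+1)*s` vertices, then `W` contains a directed path with `m` edges. -/
lemma exists_dipath [Fintype V] (G : V → V → Prop) (hG : ∀ x y, G x y → ¬ G y x)
    (s : ℝ) (hind : ∀ S : Set V, (∀ x ∈ S, ∀ y ∈ S, ¬ G x y) → (S.ncard : ℝ) < s)
    (W : Finset V) (m : ℕ) (hW : ((m : ℝ) + 1) * s ≤ (W.card : ℝ)) :
    ∃ p : ℕ → V, (∀ i ≤ m, p i ∈ W) ∧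
      (∀ i1, i1 ≤ m → ∀ i2, i2 ≤ m → p i1 = p i2 → i1 = i2) ∧
      (∀ i < m, G (p i) (p (i + 1))) := by
  classical
  have hs : 0 < s := by
    have := hind ∅ (by simp)
    simpa using this
  -- the edge set of G inside W
  set E : Finset (V × V) :=
    Finset.univ.filter (fun e => G e.1 e.2 ∧ e.1 ∈ W ∧ e.2 ∈ W) with hE
  have hmemE : ∀ e : V × V, e ∈ E ↔ G e.1 e.2 ∧ e.1 ∈ W ∧ e.2 ∈ W := by
    intro e; simp [hE]
  -- a maximum acyclic subset of E
  set Acy : Finset (V × V) → Prop := fun F => ∃ r : V → ℕ, ∀ e ∈ F, r e.2 < r e.1 with hAcy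
  have hfam : (E.powerset.filter Acy).Nonempty :=
    ⟨∅, by simp [hAcy]⟩
  obtain ⟨F, hFmem, hFmax⟩ := Finset.exists_max_image (E.powerset.filter Acy) Finset.card hfam
  rw [Finset.mem_filter, Finset.mem_powerset] at hFmem
  obtain ⟨hFE, r, hr⟩ := hFmem
  -- ranks
  have hrank_ne : ∀ v u : V, (v, u) ∈ E → rankF F v ≠ rankF F u := by
    intro v u hvu
    rcases Classical.em ((v, u) ∈ F) with hF | hF
    · have := rankF_succ F r hr hF
      omega
    · -- show there is an F-walk from u to v
      have hne : v ≠ u := by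
        intro h; subst h
        exact hG v v ((hmemE _).mp hvu).1 ((hmemE _).mp hvu).1
      have hreach : ∃ d : ℕ, ∃ p : ℕ → V,
          p 0 = u ∧ (∀ i < d, (p i, p (i + 1)) ∈ F) ∧ p d = v := by
        by_contra hnr
        push_neg at hnr
        -- then insert (v,u) F is acyclic, contradicting maximality
        set Nmax : ℕ := (Finset.univ.sup (rankF F)) + 1 with hN
        set Reach : V → Prop := fun w => ∃ d : ℕ, ∃ p : ℕ → V,
            p 0 = u ∧ (∀ i < d, (p i, p (i + 1)) ∈ F) ∧ p d = w with hReach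
        have hRu : Reach u := ⟨0, fun _ => u, rfl, fun i hi => absurd hi (Nat.not_lt_zero i), rfl⟩
        have hRv : ¬ Reach v := by
          intro ⟨d, p, h0, hp, hd⟩
          exact hnr d p h0 (fun i hi => hp i hi) hd
        have hRstep : ∀ a b : V, (a, b) ∈ F → Reach a → Reach b := by
          rintro a b hab ⟨d, p, h0, hp, hd⟩
          refine ⟨d + 1, fun i => if i ≤ d then p i else b, by simp [h0], ?_, by simp⟩
          intro i hi
          rcases Nat.lt_or_ge i d with h' | h'
          · have := hp i h'
            simp only [if_pos (Nat.le_of_lt h'), if_pos (by omega : i + 1 ≤ d)]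
            exact this
          · have hid : i = d := by omega
            subst hid
            simp only [if_pos (le_refl i), if_neg (by omega : ¬ i + 1 ≤ i)]
            rw [hd]
            exact hab
        have hrank_lt : ∀ w : V, rankF F w < Nmax := by
          intro w
          have : rankF F w ≤ Finset.univ.sup (rankF F) :=
            Finset.le_sup (Finset.mem_univ w)
          omega
        have hAcyF' : Acy (insert (v, u) F) := by
          refine ⟨fun w => rankF F w + (if Reach w then 0 else Nmax), ?_⟩
          intro e he
          rcases Finset.mem_insert.mp he with he | he
          · subst he
            simp only
            rw [if_pos hRu, if_neg hRv]
            have := hrank_lt u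
            omega
          · have hlt := rankF_succ F r hr he
            simp only
            rcases Classical.em (Reach e.1) with h1 | h1
            · rw [if_pos (hRstep e.1 e.2 (by rcases e with ⟨a,b⟩; exact he) h1), if_pos h1]
              omega
            · rw [if_neg h1]
              rcases Classical.em (Reach e.2) with h2 | h2
              · rw [if_pos h2]
                have := hrank_lt e.2
                omega
              · rw [if_neg h2]
                omega
        have hF'mem : insert (v, u) F ∈ E.powerset.filter Acy := by
          rw [Finset.mem_filter, Finset.mem_powerset]
          exact ⟨Finset.insert_subset hvu hFE, hAcyF'⟩
        have := hFmax _ hF'mem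
        rw [Finset.card_insert_of_notMem hF] at this
        omega
      obtain ⟨d, p, h0, hp, hd⟩ := hreach
      have hd0 : d ≠ 0 := by
        intro h; subst h; rw [h0] at hd; exact hne hd.symm
      have := rankF_walk F r hr p d hp
      rw [h0, hd] at this
      omega
  -- fibers of rank are independent, hence small
  set R : ℕ := W.sup (rankF F) with hR
  have hcard_sum : W.card = ∑ j ∈ Finset.range (R + 1),
      (W.filter (fun w => rankF F w = j)).card := by
    refine Finset.card_eq_sum_card_fiberwise ?_
    intro x hx
    rw [Finset.coe_range, Set.mem_Iio]
    have := Finset.le_sup (f := rankF F) hx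
    omega
  have hfiber : ∀ j, ((W.filter (fun w => rankF F w = j)).card : ℝ) < s := by
    intro j
    have hindep : ∀ x ∈ (W.filter (fun w => rankF F w = j) : Set V),
        ∀ y ∈ (W.filter (fun w => rankF F w = j) : Set V), ¬ G x y := by
      intro x hx y hy hxy
      simp only [Finset.coe_filter, Set.mem_setOf_eq] at hx hy
      exact hrank_ne x y ((hmemE (x, y)).mpr ⟨hxy, hx.1, hy.1⟩) (hx.2.trans hy.2.symm)
    have := hind _ hindep
    rwa [Set.ncard_coe_finset] at this
  have hWlt : (W.card : ℝ) < ((R : ℝ) + 1) * s := by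
    calc (W.card : ℝ) = ∑ j ∈ Finset.range (R + 1),
        ((W.filter (fun w => rankF F w = j)).card : ℝ) := by
          rw [hcard_sum]; push_cast; ring
      _ < ∑ _j ∈ Finset.range (R + 1), s :=
          Finset.sum_lt_sum_of_nonempty (by simp) (fun j _ => hfiber j)
      _ = ((R : ℝ) + 1) * s := by
          rw [Finset.sum_const, Finset.card_range]; push_cast; ring
  have hmR : m < R + 1 := by
    by_contra h
    push_neg at h
    have hc : (R : ℝ) + 1 ≤ (m : ℝ) := by exact_mod_cast h
    nlinarith
  have hmR' : m ≤ R := by omega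
  -- a vertex of maximum rank
  have hWpos : (0 : ℝ) < (W.card : ℝ) := lt_of_lt_of_le (by positivity) hW
  have hWne : W.Nonempty := Finset.card_pos.mp (by exact_mod_cast hWpos)
  obtain ⟨v, hvW, hvR⟩ := Finset.exists_mem_eq_sup W hWne (rankF F)
  obtain ⟨p, h0, hp⟩ := rankF_mem F r hr v
  have hRrank : rankF F v = R := hvR.symm
  refine ⟨p, ?_, ?_, ?_⟩
  · intro i hi
    rcases Nat.eq_zero_or_pos i with h | h
    · subst h; rw [h0]; exact hvW
    · have : (p (i - 1), p i) ∈ F := by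
        have := hp (i - 1) (by omega)
        rwa [show i - 1 + 1 = i by omega] at this
      exact ((hmemE _).mp (hFE this)).2.2
  · intro i1 h1 i2 h2 heq
    have hmono : ∀ i ≤ rankF F v, rankF F (p i) + i ≤ rankF F v := by
      intro i hi
      have := rankF_walk F r hr p i (fun j hj => hp j (by omega))
      rwa [h0] at this
    have hdec : ∀ a b, a ≤ m → b ≤ m → a < b → rankF F (p b) < rankF F (p a) := by
      intro a b ha hb hab
      have h1 := rankF_walk F r hr (fun i => p (a + i)) (b - a)
        (fun j hj => by
          have := hp (a + j) (by omega)
          simpa [Nat.add_assoc] using this)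
      simp only [Nat.add_zero, show a + (b - a) = b by omega] at h1
      omega
    rcases Nat.lt_trichotomy i1 i2 with h | h | h
    · have := hdec i1 i2 h1 h2 h; rw [heq] at this; omega
    · exact h
    · have := hdec i2 i1 h2 h1 h; rw [heq] at this; omega
  · intro i hi
    have := hp i (by omega)
    exact ((hmemE _).mp (hFE this)).1

lemma buildPath {V : Type*} [Fintype V] (G : V → V → Prop) (hG : ∀ x y, G x y → ¬ G y x)
    (n : ℕ) (ε : ℕ → Bool) (k s : ℝ) (l : ℕ)
    (X Y : Set V)
    (hout : ∀ x ∈ X, k ≤ ({y | y ∈ Y ∧ G x y}.ncard : ℝ))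
    (hin : ∀ y ∈ Y, k ≤ ({x | x ∈ X ∧ G x y}.ncard : ℝ))
    (hind : ∀ S : Set V, (∀ x ∈ S, ∀ y ∈ S, ¬ G x y) → (S.ncard : ℝ) < s)
    (hls : (l : ℝ) * s ≤ k - (n : ℝ))
    (hl : ∀ a d : ℕ, a + d ≤ n → (∀ i, a ≤ i → i < a + d → ε i = ε a) → d ≤ l) :
    ∀ d j : ℕ, j + d = n → ∀ (U : Finset V) (v : V), U.card ≤ j → v ∉ U →
      (d ≠ 0 → ((ε j = true → v ∈ X) ∧ (ε j = false → v ∈ Y))) →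
      ∃ g : ℕ → V, g j = v ∧ (∀ i, j ≤ i → i ≤ n → g i ∉ U) ∧
        (∀ i1, j ≤ i1 → i1 ≤ n → ∀ i2, j ≤ i2 → i2 ≤ n → g i1 = g i2 → i1 = i2) ∧
        (∀ i, j ≤ i → i < n →
          ((ε i = true → G (g i) (g (i + 1))) ∧ (ε i = false → G (g (i + 1)) (g i)))) := by
  classical
  have hs : 0 < s := by
    have := hind ∅ (by simp)
    simpa using this
  intro d
  induction d using Nat.strong_induction_on with
  | _ d IH =>
  intro j hj U v hU hvU hinv
  rcases Nat.eq_zero_or_pos d with hd0 | hd0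
  · subst hd0
    refine ⟨fun _ => v, rfl, ?_, ?_, ?_⟩
    · intro i h1 h2; exact hvU
    · intro i1 h1 h1' i2 h2 h2' _; omega
    · intro i h1 h2; omega
  · have hjn : j < n := by omega
    set b : Bool := ε j with hb
    have hbinv := hinv (by omega)
    -- the current run
    have hex : ∃ m', j + m' = n ∨ ε (j + m') ≠ b := ⟨d, Or.inl hj⟩
    set m : ℕ := Nat.find hex with hm
    have hmspec : j + m = n ∨ ε (j + m) ≠ b := Nat.find_spec hex
    have hmin : ∀ i < m, ε (j + i) = b ∧ j + i ≠ n := by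
      intro i hi
      have := Nat.find_min hex hi
      push_neg at this
      exact ⟨this.2, this.1⟩
    have hmd : m ≤ d := Nat.find_le (Or.inl hj)
    have hm1 : 1 ≤ m := by
      rcases Nat.eq_zero_or_pos m with h | h
      · exfalso
        rw [h] at hmspec
        simp only [Nat.add_zero] at hmspec
        rcases hmspec with h' | h'
        · omega
        · exact h' rfl
      · exact h
    have hjmn : j + m ≤ n := by omega
    have hrun : ∀ i, j ≤ i → i < j + m → ε i = b := by
      intro i h1 h2
      have := (hmin (i - j) (by omega)).1
      rwa [show j + (i - j) = i by omega] at this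
    have hml : m ≤ l := by
      refine hl j m hjmn ?_
      intro i h1 h2
      rw [hrun i h1 h2, hrun j le_rfl (by omega)]
    -- the auxiliary relation (G or its reverse, according to the direction of the run)
    set G' : V → V → Prop := fun a c => cond b (G a c) (G c a) with hG'def
    have hG' : ∀ x y, G' x y → ¬ G' y x := by
      intro x y hxy hyx
      rw [hG'def] at hxy hyx
      cases hbb : b <;> rw [hbb] at hxy hyx <;>
        simp only [cond_false, cond_true] at hxy hyx
      · exact hG _ _ hxy hyx
      · exact hG _ _ hxy hyx
    have hind' : ∀ S : Set V, (∀ x ∈ S, ∀ y ∈ S, ¬ G' x y) → (S.ncard : ℝ) < s := by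
      intro S hS
      refine hind S ?_
      intro x hx y hy hxy
      cases hbb : b
      · refine hS y hy x hx ?_
        rw [hG'def, hbb]
        simpa using hxy
      · refine hS x hx y hy ?_
        rw [hG'def, hbb]
        simpa using hxy
    -- the target set
    set W : Finset V :=
      Finset.univ.filter (fun w => w ∈ (cond b Y X) ∧ G' v w ∧ w ∉ U ∧ w ≠ v) with hWdef
    have hWmem : ∀ w, w ∈ W ↔ w ∈ (cond b Y X) ∧ G' v w ∧ w ∉ U ∧ w ≠ v := by
      intro w; simp [hWdef]
    -- cardinality of W
    set A : Finset V := Finset.univ.filter (fun w => w ∈ (cond b Y X) ∧ G' v w) with hAdef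
    have hkA : k ≤ (A.card : ℝ) := by
      cases hbb : b
      · have hvY : v ∈ Y := hbinv.2 hbb
        have h := hin v hvY
        have heq : ({x | x ∈ X ∧ G x v} : Set V) = ↑A := by
          ext w; simp [hAdef, hG'def, hbb]
        rwa [heq, Set.ncard_coe_finset] at h
      · have hvX : v ∈ X := hbinv.1 hbb
        have h := hout v hvX
        have heq : ({y | y ∈ Y ∧ G v y} : Set V) = ↑A := by
          ext w; simp [hAdef, hG'def, hbb]
        rwa [heq, Set.ncard_coe_finset] at h
    have hAW : A ⊆ W ∪ insert v U := by
      intro w hw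
      rw [hAdef, Finset.mem_filter] at hw
      rcases Classical.em (w ∈ U) with h | h
      · exact Finset.mem_union_right _ (Finset.mem_insert_of_mem h)
      · rcases Classical.em (w = v) with h' | h'
        · exact Finset.mem_union_right _ (by rw [h']; exact Finset.mem_insert_self _ _)
        · exact Finset.mem_union_left _ ((hWmem w).mpr ⟨hw.2.1, hw.2.2, h, h'⟩)
    have hWcard : k - (n : ℝ) ≤ (W.card : ℝ) := by
      have h1 : A.card ≤ W.card + (U.card + 1) := by
        calc A.card ≤ (W ∪ insert v U).card := Finset.card_le_card hAW
          _ ≤ W.card + (insert v U).card := Finset.card_union_le _ _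
          _ ≤ W.card + (U.card + 1) := by
              have := Finset.card_insert_le v U; omega
      have h2 : (A.card : ℝ) ≤ (W.card : ℝ) + (n : ℝ) := by
        have : A.card ≤ W.card + n := by omega
        exact_mod_cast this
      linarith
    have hWm : (((m - 1 : ℕ) : ℝ) + 1) * s ≤ (W.card : ℝ) := by
      have hcast : ((m - 1 : ℕ) : ℝ) + 1 = (m : ℝ) := by
        have : ((m - 1 : ℕ) : ℝ) = (m : ℝ) - 1 := by
          have : (m : ℝ) - 1 = ((m - 1 : ℕ) : ℝ) := by
            push_cast [Nat.cast_sub hm1]; ring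
          linarith
        rw [this]; ring
      rw [hcast]
      have h1 : (m : ℝ) * s ≤ (l : ℝ) * s := by
        have : (m : ℝ) ≤ (l : ℝ) := by exact_mod_cast hml
        exact mul_le_mul_of_nonneg_right this hs.le
      linarith
    obtain ⟨p, hpW, hpinj, hpe⟩ := exists_dipath G' hG' s hind' W (m - 1) hWm
    have hpW' : ∀ t, t ≤ m - 1 → p t ∈ (cond b Y X) ∧ G' v (p t) ∧ p t ∉ U ∧ p t ≠ v :=
      fun t ht => (hWmem _).mp (hpW t ht)
    -- recursive call
    set v' : V := p (m - 1) with hv'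
    set U' : Finset V := insert v (U ∪ Finset.image p (Finset.range (m - 1))) with hU'def
    have hU'card : U'.card ≤ j + m := by
      calc U'.card ≤ (U ∪ Finset.image p (Finset.range (m - 1))).card + 1 :=
          Finset.card_insert_le _ _
        _ ≤ U.card + (Finset.image p (Finset.range (m - 1))).card + 1 := by
            have := Finset.card_union_le U (Finset.image p (Finset.range (m - 1))); omega
        _ ≤ U.card + (m - 1) + 1 := by
            have := Finset.card_image_le (f := p) (s := Finset.range (m - 1))
            rw [Finset.card_range] at this; omega
        _ ≤ j + m := by omega
    have hv'U' : v' ∉ U' := by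
      rw [hU'def]
      intro h
      rcases Finset.mem_insert.mp h with h | h
      · exact (hpW' (m - 1) le_rfl).2.2.2 h
      · rcases Finset.mem_union.mp h with h | h
        · exact (hpW' (m - 1) le_rfl).2.2.1 h
        · obtain ⟨t, ht, hte⟩ := Finset.mem_image.mp h
          rw [Finset.mem_range] at ht
          have := hpinj (m - 1) le_rfl t (by omega) hte.symm
          omega
    have hinv' : (d - m) ≠ 0 → ((ε (j + m) = true → v' ∈ X) ∧ (ε (j + m) = false → v' ∈ Y)) := by
      intro hdm
      have hne : ε (j + m) ≠ b := by
        rcases hmspec with h | h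
        · omega
        · exact h
      have hv'mem := (hpW' (m - 1) le_rfl).1
      constructor
      · intro he
        have hbf : b = false := by
          cases hbb : b
          · rfl
          · exact absurd he (by rw [hbb] at hne; exact hne)
        rw [hbf] at hv'mem
        exact hv'mem
      · intro he
        have hbt : b = true := by
          cases hbb : b
          · exact absurd he (by rw [hbb] at hne; exact hne)
          · rfl
        rw [hbt] at hv'mem
        exact hv'mem
    obtain ⟨g', hg'j, hg'U, hg'inj, hg'e⟩ :=
      IH (d - m) (by omega) (j + m) (by omega) U' v' hU'card hv'U' hinv'
    -- assemble
    set g : ℕ → V := fun i => if i ≤ j then v else if i < j + m then p (i - (j + 1)) else g' i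
      with hgdef
    have hgj : g j = v := by simp [hgdef]
    have hgp : ∀ t, t < m → g (j + 1 + t) = p t := by
      intro t ht
      rcases Nat.lt_or_ge t (m - 1) with h | h
      · have h1 : ¬ (j + 1 + t ≤ j) := by omega
        have h2 : j + 1 + t < j + m := by omega
        simp only [hgdef, if_neg h1, if_pos h2, show j + 1 + t - (j + 1) = t by omega]
      · have ht1 : t = m - 1 := by omega
        subst ht1
        have h1 : ¬ (j + 1 + (m - 1) ≤ j) := by omega
        have h2 : ¬ (j + 1 + (m - 1) < j + m) := by omega
        simp only [hgdef, if_neg h1, if_neg h2]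
        rw [show j + 1 + (m - 1) = j + m by omega, hg'j]
    have hgg' : ∀ i, j + m ≤ i → g i = g' i := by
      intro i hi
      have h1 : ¬ (i ≤ j) := by omega
      have h2 : ¬ (i < j + m) := by omega
      simp only [hgdef, if_neg h1, if_neg h2]
    -- membership facts about the three segments
    have hmid : ∀ i, j < i → i < j + m → g i = p (i - (j + 1)) ∧ i - (j + 1) ≤ m - 1 := by
      intro i h1 h2
      constructor
      · simp only [hgdef, if_neg (by omega : ¬ i ≤ j), if_pos h2]
      · omega
    have htail_ne : ∀ i, j + m ≤ i → i ≤ n → g i ∉ U ∧ g i ≠ v ∧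
        (∀ t, t < m - 1 → g i ≠ p t) := by
      intro i h1 h2
      have h3 := hg'U i h1 h2
      rw [← hgg' i h1] at h3
      rw [hU'def] at h3
      refine ⟨?_, ?_, ?_⟩
      · intro h; exact h3 (Finset.mem_insert_of_mem (Finset.mem_union_left _ h))
      · intro h; exact h3 (by rw [h]; exact Finset.mem_insert_self _ _)
      · intro t ht h
        exact h3 (Finset.mem_insert_of_mem (Finset.mem_union_right _
          (Finset.mem_image.mpr ⟨t, Finset.mem_range.mpr ht, h.symm⟩)))
    refine ⟨g, hgj, ?_, ?_, ?_⟩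
    · -- avoid U
      intro i h1 h2
      rcases Nat.lt_or_ge i (j + m) with h | h
      · rcases Nat.eq_or_lt_of_le h1 with h' | h'
        · rw [← h', hgj]; exact hvU
        · rw [(hmid i h' h).1]
          exact (hpW' _ (hmid i h' h).2).2.2.1
      · exact (htail_ne i h h2).1
    · -- injectivity
      intro i1 h1 h1' i2 h2 h2' heq
      -- classify
      have key : ∀ a, j ≤ a → a ≤ n → (a = j) ∨ (j < a ∧ a < j + m) ∨ (j + m ≤ a) := by
        intro a ha ha'; omega
      rcases key i1 h1 h1' with k1 | k1 | k1 <;> rcases key i2 h2 h2' with k2 | k2 | k2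
      · omega
      · exfalso
        rw [k1, hgj] at heq
        exact (hpW' _ (hmid i2 k2.1 k2.2).2).2.2.2 (by rw [← (hmid i2 k2.1 k2.2).1, ← heq])
      · exfalso
        rw [k1, hgj] at heq
        exact (htail_ne i2 k2 h2').2.1 heq.symm
      · exfalso
        rw [k2, hgj] at heq
        exact (hpW' _ (hmid i1 k1.1 k1.2).2).2.2.2 (by rw [← (hmid i1 k1.1 k1.2).1, heq])
      · rw [(hmid i1 k1.1 k1.2).1, (hmid i2 k2.1 k2.2).1] at heq
        have := hpinj _ (hmid i1 k1.1 k1.2).2 _ (hmid i2 k2.1 k2.2).2 heq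
        omega
      · exfalso
        rw [(hmid i1 k1.1 k1.2).1] at heq
        exact (htail_ne i2 k2 h2').2.2 _ (by omega) heq.symm
      · exfalso
        rw [k2, hgj] at heq
        exact (htail_ne i1 k1 h1').2.1 heq
      · exfalso
        rw [(hmid i2 k2.1 k2.2).1] at heq
        exact (htail_ne i1 k1 h1').2.2 _ (by omega) heq
      · rw [hgg' i1 k1, hgg' i2 k2] at heq
        exact hg'inj i1 k1 h1' i2 k2 h2' heq
    · -- edges
      intro i h1 h2
      rcases Nat.lt_or_ge i (j + m) with h | h
      · -- inside the run : ε i = b and we have a G'-edge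
        have hei : ε i = b := hrun i h1 h
        have hedge : G' (g i) (g (i + 1)) := by
          rcases Nat.eq_or_lt_of_le h1 with h' | h'
          · -- i = j
            have hgp0 : g (j + 1) = p 0 := by
              have := hgp 0 (by omega)
              simpa using this
            rw [← h', hgj, hgp0]
            exact (hpW' 0 (by omega)).2.1
          · -- j < i < j + m
            have e1 : g i = p (i - (j + 1)) := (hmid i h' h).1
            have e2 : g (i + 1) = p (i - (j + 1) + 1) := by
              have := hgp (i - (j + 1) + 1) (by omega)
              rwa [show j + 1 + (i - (j + 1) + 1) = i + 1 by omega] at this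
            rw [e1, e2]
            exact hpe _ (by omega)
        constructor
        · intro he
          have hbt : b = true := by rw [← hei, he]
          rw [hG'def, hbt] at hedge
          exact hedge
        · intro he
          have hbf : b = false := by rw [← hei, he]
          rw [hG'def, hbf] at hedge
          exact hedge
      · have e1 : g i = g' i := hgg' i h
        have e2 : g (i + 1) = g' (i + 1) := hgg' (i + 1) (by omega)
        rw [e1, e2]
        exact hg'e i h h2


end PathAux

/-- The oriented path of length `n` (on `n+1` vertices) whose `i`-th edge is directed
forwards iff `ε i = true`. -/
def PathRel (n : ℕ) (ε : ℕ → Bool) (x y : Fin (n + 1)) : Prop :=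
  ∃ i : ℕ, i < n ∧
    ((ε i = true ∧ (x : ℕ) = i ∧ (y : ℕ) = i + 1) ∨
     (ε i = false ∧ (x : ℕ) = i + 1 ∧ (y : ℕ) = i))

/-- The length of the longest directed subpath of the oriented path of length `n`
encoded by `ε`, i.e. the longest constant run of `ε` inside `[0, n)`. -/
noncomputable def maxRun (n : ℕ) (ε : ℕ → Bool) : ℕ :=
  sSup {d | ∃ a, a + d ≤ n ∧ ∀ i, a ≤ i → i < a + d → ε i = ε a}

/-- If an oriented graph `G` has a `k`-mindegree pair, then either an
oriented path `P` of length `n ≥ 1` is a subgraph of `G`, or `G` has an independent set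
of size at least `(k - n) / l(P)`. -/
theorem path_or_independent_set {V : Type*} [Fintype V] (G : V → V → Prop)
    (hG : ∀ x y, G x y → ¬ G y x)
    (n : ℕ) (hn : 0 < n) (ε : ℕ → Bool) (k : ℝ)
    (X Y : Set V) (hX : X.Nonempty) (hY : Y.Nonempty) (hXY : Disjoint X Y)
    (hout : ∀ x ∈ X, k ≤ ({y | y ∈ Y ∧ G x y}.ncard : ℝ))
    (hin : ∀ y ∈ Y, k ≤ ({x | x ∈ X ∧ G x y}.ncard : ℝ)) :
    (∃ f : Fin (n + 1) → V, Function.Injective f ∧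
        ∀ x y, PathRel n ε x y → G (f x) (f y)) ∨
    (∃ S : Set V, (∀ x ∈ S, ∀ y ∈ S, ¬ G x y) ∧
        (k - n) / (maxRun n ε : ℝ) ≤ (S.ncard : ℝ)) := by
  classical
  by_cases hS : ∃ S : Set V, (∀ x ∈ S, ∀ y ∈ S, ¬ G x y) ∧
      (k - n) / (maxRun n ε : ℝ) ≤ (S.ncard : ℝ)
  · exact Or.inr hS
  push_neg at hS
  left
  set l : ℕ := maxRun n ε with hldef
  set s : ℝ := (k - n) / (l : ℝ) with hsdef
  have hind : ∀ S : Set V, (∀ x ∈ S, ∀ y ∈ S, ¬ G x y) → (S.ncard : ℝ) < s := hS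
  -- basic facts about maxRun
  have hbdd : BddAbove {d | ∃ a, a + d ≤ n ∧ ∀ i, a ≤ i → i < a + d → ε i = ε a} := by
    refine ⟨n, fun d hd => ?_⟩
    obtain ⟨a, ha, -⟩ := hd
    omega
  have hl1 : 1 ≤ l := by
    refine le_csSup hbdd ⟨0, by omega, ?_⟩
    intro i h1 h2
    have : i = 0 := by omega
    rw [this]
  have hl : ∀ a d : ℕ, a + d ≤ n → (∀ i, a ≤ i → i < a + d → ε i = ε a) → d ≤ l :=
    fun a d h1 h2 => le_csSup hbdd ⟨a, h1, h2⟩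
  have hs1 : 1 < s := by
    obtain ⟨x₀, hx₀⟩ := hX
    have hindep : ∀ x ∈ ({x₀} : Set V), ∀ y ∈ ({x₀} : Set V), ¬ G x y := by
      intro x hx y hy hxy
      rw [Set.mem_singleton_iff] at hx hy
      subst hx; subst hy
      exact hG _ _ hxy hxy
    have := hind _ hindep
    simpa using this
  have hls : (l : ℝ) * s ≤ k - (n : ℝ) := by
    rw [hsdef]
    rw [mul_div_cancel₀]
    positivity
  -- starting vertex
  have hstart : ∃ v : V, (ε 0 = true → v ∈ X) ∧ (ε 0 = false → v ∈ Y) := by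
    cases h : ε 0
    · obtain ⟨y₀, hy₀⟩ := hY
      exact ⟨y₀, fun h' => absurd h' (by simp), fun _ => hy₀⟩
    · obtain ⟨x₀, hx₀⟩ := hX
      exact ⟨x₀, fun _ => hx₀, fun h' => absurd h' (by simp)⟩
  obtain ⟨v, hv⟩ := hstart
  obtain ⟨g, hgj, hgU, hginj, hge⟩ := PathAux.buildPath G hG n ε k s l X Y hout hin hind hls hl
    n 0 (by omega) ∅ v (by simp) (by simp) (fun _ => hv)
  refine ⟨fun i => g (i : ℕ), ?_, ?_⟩
  · intro a b hab
    have ha : (a : ℕ) ≤ n := by omega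
    have hb : (b : ℕ) ≤ n := by omega
    have := hginj (a : ℕ) (by omega) ha (b : ℕ) (by omega) hb hab
    exact Fin.ext this
  · intro x y hxy
    obtain ⟨i, hi, hcase⟩ := hxy
    rcases hcase with ⟨he, hx, hy⟩ | ⟨he, hx, hy⟩
    · have := (hge i (by omega) hi).1 he
      show G (g (x : ℕ)) (g (y : ℕ))
      rw [hx, hy]
      exact this
    · have := (hge i (by omega) hi).2 he
      show G (g (x : ℕ)) (g (y : ℕ))
      rw [hx, hy]
      exact this
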